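/- Let ρ_1, ρ_2, ρ_3 > 0, r_1, r_2, r_3 ≥ 0, R_1, R_2, R_3 ≥ 0, S_{12}, S_{13}, S_{23} ≥ 0 be real numbers, and for a unit vector v̂ ∈ S² define m̄_a(k) = ρ_a k − r_a and f(k) = m̄_1 m̄_2 m̄_3 − Σ_a (∏_{b≠a} m̄_b) R_a v̂_a² − Σ_{a<b} m̄_c S_{ab} v̂_a² v̂_b² (where c is the index complementary to {a,b}). Suppose m̄_a(1) > 0 for all a and f(1) ≥ 0, and in f all coefficients satisfy R_a, S_{ab} ≥ 0. Then f(k) > 0 for all k > 1. -/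
import Mathlib


/-- With `m̄_a(k) = ρ_a k − r_a` (`ρ_a > 0`, `r_a ≥ 0`),
coefficients `R_a ≥ 0`, `S_{ab} ≥ 0`, and a unit vector `v̂`, the cubic
`f(k) = m̄₁m̄₂m̄₃ − Σ_a (∏_{b≠a} m̄_b) R_a v̂_a² − Σ_{a<b} m̄_c S_{ab} v̂_a² v̂_b²`
satisfies `f(k) > 0` for all `k > 1` whenever `m̄_a(1) > 0` for all `a` and
`f(1) ≥ 0`. -/
theorem stmt_4 (ρ1 ρ2 ρ3 r1 r2 r3 R1 R2 R3 S12 S13 S23 v1 v2 v3 : ℝ)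
    (hρ1 : 0 < ρ1) (hρ2 : 0 < ρ2) (hρ3 : 0 < ρ3)
    (hr1 : 0 ≤ r1) (hr2 : 0 ≤ r2) (hr3 : 0 ≤ r3)
    (hR1 : 0 ≤ R1) (hR2 : 0 ≤ R2) (hR3 : 0 ≤ R3)
    (hS12 : 0 ≤ S12) (hS13 : 0 ≤ S13) (hS23 : 0 ≤ S23)
    (hv : v1 ^ 2 + v2 ^ 2 + v3 ^ 2 = 1)
    (m1 m2 m3 f : ℝ → ℝ)
    (hm1 : ∀ k, m1 k = ρ1 * k - r1)
    (hm2 : ∀ k, m2 k = ρ2 * k - r2)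
    (hm3 : ∀ k, m3 k = ρ3 * k - r3)
    (hfdef : ∀ k, f k =
      m1 k * m2 k * m3 k
        - (m2 k * m3 k * R1 * v1 ^ 2 + m1 k * m3 k * R2 * v2 ^ 2
            + m1 k * m2 k * R3 * v3 ^ 2)
        - (m3 k * S12 * v1 ^ 2 * v2 ^ 2 + m2 k * S13 * v1 ^ 2 * v3 ^ 2
            + m1 k * S23 * v2 ^ 2 * v3 ^ 2))
    (hm1pos : 0 < m1 1) (hm2pos : 0 < m2 1) (hm3pos : 0 < m3 1)
    (hf1 : 0 ≤ f 1) :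
    ∀ k > (1 : ℝ), 0 < f k := by
  intro k hk
  have hA1 : 0 < ρ1 - r1 := by rw [hm1] at hm1pos; linarith
  have hA2 : 0 < ρ2 - r2 := by rw [hm2] at hm2pos; linarith
  have hA3 : 0 < ρ3 - r3 := by rw [hm3] at hm3pos; linarith
  have hF1 : 0 ≤ (ρ1 - r1) * (ρ2 - r2) * (ρ3 - r3)
      - ((ρ2 - r2) * (ρ3 - r3) * R1 * v1 ^ 2 + (ρ1 - r1) * (ρ3 - r3) * R2 * v2 ^ 2
          + (ρ1 - r1) * (ρ2 - r2) * R3 * v3 ^ 2)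
      - ((ρ3 - r3) * S12 * v1 ^ 2 * v2 ^ 2 + (ρ2 - r2) * S13 * v1 ^ 2 * v3 ^ 2
          + (ρ1 - r1) * S23 * v2 ^ 2 * v3 ^ 2) := by
    have h := hf1
    rw [hfdef, hm1, hm2, hm3] at h
    norm_num at h
    linarith
  have hv1 : (0:ℝ) ≤ v1 ^ 2 := sq_nonneg v1
  have hv2 : (0:ℝ) ≤ v2 ^ 2 := sq_nonneg v2
  have hv3 : (0:ℝ) ≤ v3 ^ 2 := sq_nonneg v3
  have n1 : 0 ≤ (ρ2 - r2) * (ρ3 - r3) * R1 * v1 ^ 2 :=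
    mul_nonneg (mul_nonneg (mul_nonneg hA2.le hA3.le) hR1) hv1
  have n2 : 0 ≤ (ρ1 - r1) * (ρ3 - r3) * R2 * v2 ^ 2 :=
    mul_nonneg (mul_nonneg (mul_nonneg hA1.le hA3.le) hR2) hv2
  have n3 : 0 ≤ (ρ1 - r1) * (ρ2 - r2) * R3 * v3 ^ 2 :=
    mul_nonneg (mul_nonneg (mul_nonneg hA1.le hA2.le) hR3) hv3
  have n4 : 0 ≤ (ρ3 - r3) * S12 * v1 ^ 2 * v2 ^ 2 :=
    mul_nonneg (mul_nonneg (mul_nonneg hA3.le hS12) hv1) hv2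
  have n5 : 0 ≤ (ρ2 - r2) * S13 * v1 ^ 2 * v3 ^ 2 :=
    mul_nonneg (mul_nonneg (mul_nonneg hA2.le hS13) hv1) hv3
  have n6 : 0 ≤ (ρ1 - r1) * S23 * v2 ^ 2 * v3 ^ 2 :=
    mul_nonneg (mul_nonneg (mul_nonneg hA1.le hS23) hv2) hv3
  have hB1 : 0 ≤ (ρ2 - r2) * (ρ3 - r3) - (ρ3 - r3) * R2 * v2 ^ 2
      - (ρ2 - r2) * R3 * v3 ^ 2 - S23 * v2 ^ 2 * v3 ^ 2 := by
    refine nonneg_of_mul_nonneg_right ?_ hA1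
    have hid : (ρ1 - r1) * ((ρ2 - r2) * (ρ3 - r3) - (ρ3 - r3) * R2 * v2 ^ 2
        - (ρ2 - r2) * R3 * v3 ^ 2 - S23 * v2 ^ 2 * v3 ^ 2)
      = ((ρ1 - r1) * (ρ2 - r2) * (ρ3 - r3)
      - ((ρ2 - r2) * (ρ3 - r3) * R1 * v1 ^ 2 + (ρ1 - r1) * (ρ3 - r3) * R2 * v2 ^ 2
          + (ρ1 - r1) * (ρ2 - r2) * R3 * v3 ^ 2)
      - ((ρ3 - r3) * S12 * v1 ^ 2 * v2 ^ 2 + (ρ2 - r2) * S13 * v1 ^ 2 * v3 ^ 2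
          + (ρ1 - r1) * S23 * v2 ^ 2 * v3 ^ 2))
        + (ρ2 - r2) * (ρ3 - r3) * R1 * v1 ^ 2
        + (ρ3 - r3) * S12 * v1 ^ 2 * v2 ^ 2
        + (ρ2 - r2) * S13 * v1 ^ 2 * v3 ^ 2 := by ring
    rw [hid]; linarith
  have hB2 : 0 ≤ (ρ1 - r1) * (ρ3 - r3) - (ρ3 - r3) * R1 * v1 ^ 2
      - (ρ1 - r1) * R3 * v3 ^ 2 - S13 * v1 ^ 2 * v3 ^ 2 := by
    refine nonneg_of_mul_nonneg_right ?_ hA2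
    have hid : (ρ2 - r2) * ((ρ1 - r1) * (ρ3 - r3) - (ρ3 - r3) * R1 * v1 ^ 2
        - (ρ1 - r1) * R3 * v3 ^ 2 - S13 * v1 ^ 2 * v3 ^ 2)
      = ((ρ1 - r1) * (ρ2 - r2) * (ρ3 - r3)
      - ((ρ2 - r2) * (ρ3 - r3) * R1 * v1 ^ 2 + (ρ1 - r1) * (ρ3 - r3) * R2 * v2 ^ 2
          + (ρ1 - r1) * (ρ2 - r2) * R3 * v3 ^ 2)
      - ((ρ3 - r3) * S12 * v1 ^ 2 * v2 ^ 2 + (ρ2 - r2) * S13 * v1 ^ 2 * v3 ^ 2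
          + (ρ1 - r1) * S23 * v2 ^ 2 * v3 ^ 2))
        + (ρ1 - r1) * (ρ3 - r3) * R2 * v2 ^ 2
        + (ρ3 - r3) * S12 * v1 ^ 2 * v2 ^ 2
        + (ρ1 - r1) * S23 * v2 ^ 2 * v3 ^ 2 := by ring
    rw [hid]; linarith
  have hB3 : 0 ≤ (ρ1 - r1) * (ρ2 - r2) - (ρ2 - r2) * R1 * v1 ^ 2
      - (ρ1 - r1) * R2 * v2 ^ 2 - S12 * v1 ^ 2 * v2 ^ 2 := by
    refine nonneg_of_mul_nonneg_right ?_ hA3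
    have hid : (ρ3 - r3) * ((ρ1 - r1) * (ρ2 - r2) - (ρ2 - r2) * R1 * v1 ^ 2
        - (ρ1 - r1) * R2 * v2 ^ 2 - S12 * v1 ^ 2 * v2 ^ 2)
      = ((ρ1 - r1) * (ρ2 - r2) * (ρ3 - r3)
      - ((ρ2 - r2) * (ρ3 - r3) * R1 * v1 ^ 2 + (ρ1 - r1) * (ρ3 - r3) * R2 * v2 ^ 2
          + (ρ1 - r1) * (ρ2 - r2) * R3 * v3 ^ 2)
      - ((ρ3 - r3) * S12 * v1 ^ 2 * v2 ^ 2 + (ρ2 - r2) * S13 * v1 ^ 2 * v3 ^ 2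
          + (ρ1 - r1) * S23 * v2 ^ 2 * v3 ^ 2))
        + (ρ1 - r1) * (ρ2 - r2) * R3 * v3 ^ 2
        + (ρ2 - r2) * S13 * v1 ^ 2 * v3 ^ 2
        + (ρ1 - r1) * S23 * v2 ^ 2 * v3 ^ 2 := by ring
    rw [hid]; linarith
  have hD1 : 0 ≤ (ρ1 - r1) - R1 * v1 ^ 2 := by
    refine nonneg_of_mul_nonneg_right ?_ (mul_pos hA2 hA3)
    have hid : (ρ2 - r2) * (ρ3 - r3) * ((ρ1 - r1) - R1 * v1 ^ 2)
      = ((ρ1 - r1) * (ρ2 - r2) * (ρ3 - r3)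
      - ((ρ2 - r2) * (ρ3 - r3) * R1 * v1 ^ 2 + (ρ1 - r1) * (ρ3 - r3) * R2 * v2 ^ 2
          + (ρ1 - r1) * (ρ2 - r2) * R3 * v3 ^ 2)
      - ((ρ3 - r3) * S12 * v1 ^ 2 * v2 ^ 2 + (ρ2 - r2) * S13 * v1 ^ 2 * v3 ^ 2
          + (ρ1 - r1) * S23 * v2 ^ 2 * v3 ^ 2))
        + (ρ1 - r1) * (ρ3 - r3) * R2 * v2 ^ 2 + (ρ1 - r1) * (ρ2 - r2) * R3 * v3 ^ 2
        + (ρ3 - r3) * S12 * v1 ^ 2 * v2 ^ 2 + (ρ2 - r2) * S13 * v1 ^ 2 * v3 ^ 2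
        + (ρ1 - r1) * S23 * v2 ^ 2 * v3 ^ 2 := by ring
    rw [hid]; linarith
  have hD2 : 0 ≤ (ρ2 - r2) - R2 * v2 ^ 2 := by
    refine nonneg_of_mul_nonneg_right ?_ (mul_pos hA1 hA3)
    have hid : (ρ1 - r1) * (ρ3 - r3) * ((ρ2 - r2) - R2 * v2 ^ 2)
      = ((ρ1 - r1) * (ρ2 - r2) * (ρ3 - r3)
      - ((ρ2 - r2) * (ρ3 - r3) * R1 * v1 ^ 2 + (ρ1 - r1) * (ρ3 - r3) * R2 * v2 ^ 2
          + (ρ1 - r1) * (ρ2 - r2) * R3 * v3 ^ 2)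
      - ((ρ3 - r3) * S12 * v1 ^ 2 * v2 ^ 2 + (ρ2 - r2) * S13 * v1 ^ 2 * v3 ^ 2
          + (ρ1 - r1) * S23 * v2 ^ 2 * v3 ^ 2))
        + (ρ2 - r2) * (ρ3 - r3) * R1 * v1 ^ 2 + (ρ1 - r1) * (ρ2 - r2) * R3 * v3 ^ 2
        + (ρ3 - r3) * S12 * v1 ^ 2 * v2 ^ 2 + (ρ2 - r2) * S13 * v1 ^ 2 * v3 ^ 2
        + (ρ1 - r1) * S23 * v2 ^ 2 * v3 ^ 2 := by ring
    rw [hid]; linarith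
  have hD3 : 0 ≤ (ρ3 - r3) - R3 * v3 ^ 2 := by
    refine nonneg_of_mul_nonneg_right ?_ (mul_pos hA1 hA2)
    have hid : (ρ1 - r1) * (ρ2 - r2) * ((ρ3 - r3) - R3 * v3 ^ 2)
      = ((ρ1 - r1) * (ρ2 - r2) * (ρ3 - r3)
      - ((ρ2 - r2) * (ρ3 - r3) * R1 * v1 ^ 2 + (ρ1 - r1) * (ρ3 - r3) * R2 * v2 ^ 2
          + (ρ1 - r1) * (ρ2 - r2) * R3 * v3 ^ 2)
      - ((ρ3 - r3) * S12 * v1 ^ 2 * v2 ^ 2 + (ρ2 - r2) * S13 * v1 ^ 2 * v3 ^ 2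
          + (ρ1 - r1) * S23 * v2 ^ 2 * v3 ^ 2))
        + (ρ2 - r2) * (ρ3 - r3) * R1 * v1 ^ 2 + (ρ1 - r1) * (ρ3 - r3) * R2 * v2 ^ 2
        + (ρ3 - r3) * S12 * v1 ^ 2 * v2 ^ 2 + (ρ2 - r2) * S13 * v1 ^ 2 * v3 ^ 2
        + (ρ1 - r1) * S23 * v2 ^ 2 * v3 ^ 2 := by ring
    rw [hid]; linarith
  have hu : (0:ℝ) < k - 1 := by linarith
  have hkey : f k =
      ((ρ1 - r1) * (ρ2 - r2) * (ρ3 - r3)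
      - ((ρ2 - r2) * (ρ3 - r3) * R1 * v1 ^ 2 + (ρ1 - r1) * (ρ3 - r3) * R2 * v2 ^ 2
          + (ρ1 - r1) * (ρ2 - r2) * R3 * v3 ^ 2)
      - ((ρ3 - r3) * S12 * v1 ^ 2 * v2 ^ 2 + (ρ2 - r2) * S13 * v1 ^ 2 * v3 ^ 2
          + (ρ1 - r1) * S23 * v2 ^ 2 * v3 ^ 2))
      + (k - 1) * (ρ1 * ((ρ2 - r2) * (ρ3 - r3) - (ρ3 - r3) * R2 * v2 ^ 2
            - (ρ2 - r2) * R3 * v3 ^ 2 - S23 * v2 ^ 2 * v3 ^ 2)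
          + ρ2 * ((ρ1 - r1) * (ρ3 - r3) - (ρ3 - r3) * R1 * v1 ^ 2
            - (ρ1 - r1) * R3 * v3 ^ 2 - S13 * v1 ^ 2 * v3 ^ 2)
          + ρ3 * ((ρ1 - r1) * (ρ2 - r2) - (ρ2 - r2) * R1 * v1 ^ 2
            - (ρ1 - r1) * R2 * v2 ^ 2 - S12 * v1 ^ 2 * v2 ^ 2))
      + (k - 1) ^ 2 * (ρ2 * ρ3 * ((ρ1 - r1) - R1 * v1 ^ 2)
          + ρ1 * ρ3 * ((ρ2 - r2) - R2 * v2 ^ 2)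
          + ρ1 * ρ2 * ((ρ3 - r3) - R3 * v3 ^ 2))
      + (k - 1) ^ 3 * (ρ1 * ρ2 * ρ3) := by
    rw [hfdef, hm1, hm2, hm3]; ring
  rw [hkey]
  have t1 : 0 ≤ (k - 1) * (ρ1 * ((ρ2 - r2) * (ρ3 - r3) - (ρ3 - r3) * R2 * v2 ^ 2
        - (ρ2 - r2) * R3 * v3 ^ 2 - S23 * v2 ^ 2 * v3 ^ 2)
      + ρ2 * ((ρ1 - r1) * (ρ3 - r3) - (ρ3 - r3) * R1 * v1 ^ 2
        - (ρ1 - r1) * R3 * v3 ^ 2 - S13 * v1 ^ 2 * v3 ^ 2)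
      + ρ3 * ((ρ1 - r1) * (ρ2 - r2) - (ρ2 - r2) * R1 * v1 ^ 2
        - (ρ1 - r1) * R2 * v2 ^ 2 - S12 * v1 ^ 2 * v2 ^ 2)) := by
    apply mul_nonneg hu.le
    have h1 := mul_nonneg hρ1.le hB1
    have h2 := mul_nonneg hρ2.le hB2
    have h3 := mul_nonneg hρ3.le hB3
    linarith
  have t2 : 0 ≤ (k - 1) ^ 2 * (ρ2 * ρ3 * ((ρ1 - r1) - R1 * v1 ^ 2)
      + ρ1 * ρ3 * ((ρ2 - r2) - R2 * v2 ^ 2) + ρ1 * ρ2 * ((ρ3 - r3) - R3 * v3 ^ 2)) := by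
    apply mul_nonneg (sq_nonneg _)
    have h1 := mul_nonneg (mul_pos hρ2 hρ3).le hD1
    have h2 := mul_nonneg (mul_pos hρ1 hρ3).le hD2
    have h3 := mul_nonneg (mul_pos hρ1 hρ2).le hD3
    linarith
  have t3 : 0 < (k - 1) ^ 3 * (ρ1 * ρ2 * ρ3) :=
    mul_pos (pow_pos hu 3) (mul_pos (mul_pos hρ1 hρ2) hρ3)
  linarith
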